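/- arXiv:2311.10180 — 2 statements merged into one kernel-verified Lean document; each statement's English description precedes it below -/
import Mathlib

section
/- The left composition of packed words satisfies the sequential (nested) associativity axiom: for packed words u with letter set {1,…,n}, v with letter set {1,…,m}, w with letter set {1,…,p}, and indices i ∈ {1,…,n}, j ∈ {1,…,m}, one has (u ∘←_i v) ∘←_{i+j−1} w = u ∘←_i (v ∘←_j w). -/
/-- Increment by `α` every letter strictly greater than `β`. -/
def Inc (α β : ℕ) (u : List ℕ) : List ℕ := u.map fun a => if β < a then a + α else a

/-- Maximal letter of a word. -/
def maxLetter (v : List ℕ) : ℕ := v.foldr max 0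

/-- A packed word whose letter set is exactly `{1, …, k}`. -/
def IsPackedOn (k : ℕ) (w : List ℕ) : Prop := w.toFinset = Finset.Icc 1 k

/-- A packed word. -/
def IsPacked (w : List ℕ) : Prop := ∃ k, IsPackedOn k w

/-- A permutation of `{1, …, n}` identified with the word `σ(1) ⋯ σ(n)`. -/
def IsPermWord (n : ℕ) (σ : List ℕ) : Prop :=
  σ.length = n ∧ σ.toFinset = Finset.Icc 1 n

/-- `σ` is the standardization of `w`: a permutation word of `{1, …, n}` with the same
inversions as `w` (0-based indexing). -/
def IsStdOf (w σ : List ℕ) : Prop :=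
  IsPermWord w.length σ ∧
    ∀ i j : ℕ, i < j → j < w.length →
      (w.getD j 0 < w.getD i 0 ↔ σ.getD j 0 < σ.getD i 0)

/-- The weakly increasing rearrangement (composition type) of a word. -/
def chi (w : List ℕ) : List ℕ := List.insertionSort (· ≤ ·) w

/-- Right composition `u ∘→_i v` of packed words (`i` is 1-based). -/
def rightComp (u : List ℕ) (i : ℕ) (v : List ℕ) : List ℕ :=
  Inc (maxLetter v - 1) (u.getD (i - 1) 0) (u.take (i - 1))
    ++ Inc (u.getD (i - 1) 0 - 1) 0 v
    ++ Inc (maxLetter v - 1) (u.getD (i - 1) 0 - 1) (u.drop i)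

/-- Left composition `u ∘←_i v` of packed words: replace in `Inc (m-1) i u` every
occurrence of the letter `i` by the word `Inc (i-1) 0 v`, where `m` is the maximal
letter of `v`. -/
def leftComp (u : List ℕ) (i : ℕ) (v : List ℕ) : List ℕ :=
  u.flatMap fun a =>
    if a = i then Inc (i - 1) 0 v else [if i < a then a + (maxLetter v - 1) else a]

/-- Block composition `B_i(α, β)` of permutation words (`i` is 1-based, `β` a permutation
of `{1, …, m}` with `m = β.length`). -/
def blockComp (α : List ℕ) (i : ℕ) (β : List ℕ) : List ℕ :=
  Inc (β.length - 1) (α.getD (i - 1) 0) (α.take (i - 1))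
    ++ Inc (α.getD (i - 1) 0 - 1) 0 β
    ++ Inc (β.length - 1) (α.getD (i - 1) 0 - 1) (α.drop i)

/-- The inverse of a permutation word. -/
def invWord (σ : List ℕ) : List ℕ :=
  (List.range σ.length).map fun p => σ.idxOf (p + 1) + 1

/-- The right action of a permutation word `σ` of `{1, …, n}` on a packed word with
letter set `{1, …, n}`: the `p`-th letter of `u · σ` is `σ⁻¹(u(p))`. -/
def permAct (u σ : List ℕ) : List ℕ := u.map fun a => (invWord σ).getD (a - 1) 0

/-- The identity permutation word of `{1, …, m}`. -/
def idWord (m : ℕ) : List ℕ := (List.range m).map (· + 1)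

/-- `First k u`: keep only the `k` leftmost occurrences of each letter of `u`. -/
def First (k : ℕ) (u : List ℕ) : List ℕ :=
  (List.range u.length).filterMap fun p =>
    if (u.take p).count (u.getD p 0) < k then some (u.getD p 0) else none


lemma maxLetter_le_iff (l : List ℕ) (k : ℕ) : maxLetter l ≤ k ↔ ∀ a ∈ l, a ≤ k := by
  induction l with
  | nil => simp [maxLetter]
  | cons b t ih =>
    simp only [maxLetter, List.foldr_cons, max_le_iff, List.mem_cons] at *
    constructor
    · rintro ⟨h1, h2⟩ a (rfl | ha)
      · exact h1
      · exact ih.mp h2 a ha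
    · intro h
      exact ⟨h b (Or.inl rfl), ih.mpr fun a ha => h a (Or.inr ha)⟩

lemma le_maxLetter {l : List ℕ} {a : ℕ} (h : a ∈ l) : a ≤ maxLetter l :=
  (maxLetter_le_iff l (maxLetter l)).mp le_rfl a h

lemma mem_iff_of_packed {k : ℕ} {l : List ℕ} (h : IsPackedOn k l) {a : ℕ} :
    a ∈ l ↔ (1 ≤ a ∧ a ≤ k) := by
  rw [← List.mem_toFinset, h, Finset.mem_Icc]

lemma maxLetter_of_packed {k : ℕ} {l : List ℕ} (hk : 1 ≤ k) (h : IsPackedOn k l) :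
    maxLetter l = k := by
  apply le_antisymm
  · exact (maxLetter_le_iff l k).mpr fun a ha => ((mem_iff_of_packed h).mp ha).2
  · exact le_maxLetter ((mem_iff_of_packed h).mpr ⟨hk, le_rfl⟩)

lemma maxLetter_leftComp {m p j : ℕ} {v w : List ℕ} (hv : IsPackedOn m v)
    (hw : IsPackedOn p w) (hj1 : 1 ≤ j) (hjm : j ≤ m) (hp : 1 ≤ p) :
    maxLetter (leftComp v j w) = m + p - 1 := by
  have hmw : maxLetter w = p := maxLetter_of_packed hp hw
  apply le_antisymm
  · rw [maxLetter_le_iff]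
    intro a ha
    rw [leftComp, List.mem_flatMap] at ha
    obtain ⟨b, hb, hab⟩ := ha
    obtain ⟨hb1, hbm⟩ := (mem_iff_of_packed hv).mp hb
    by_cases hbj : b = j
    · rw [if_pos hbj, Inc, List.mem_map] at hab
      obtain ⟨c, hc, rfl⟩ := hab
      obtain ⟨hc1, hcp⟩ := (mem_iff_of_packed hw).mp hc
      split <;> omega
    · rw [if_neg hbj, hmw, List.mem_singleton] at hab
      subst hab; split <;> omega
  · apply le_maxLetter
    rw [leftComp, List.mem_flatMap]
    refine ⟨m, (mem_iff_of_packed hv).mpr ⟨le_trans hj1 hjm, le_rfl⟩, ?_⟩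
    by_cases hmj : m = j
    · rw [if_pos hmj, Inc, List.mem_map]
      exact ⟨p, (mem_iff_of_packed hw).mpr ⟨hp, le_rfl⟩, by split <;> omega⟩
    · rw [if_neg hmj, hmw, List.mem_singleton]
      split <;> omega


/-- Sequential (nested) associativity for the left composition of packed words. -/
theorem leftComp_sequential_assoc (n m p i j : ℕ) (u v w : List ℕ)
    (hu : IsPackedOn n u) (hv : IsPackedOn m v) (hw : IsPackedOn p w)
    (hi : i ∈ Finset.Icc 1 n) (hj : j ∈ Finset.Icc 1 m) (hp : 1 ≤ p) :
    leftComp (leftComp u i v) (i + j - 1) w = leftComp u i (leftComp v j w) := by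
  rw [Finset.mem_Icc] at hi hj
  obtain ⟨hi1, _⟩ := hi
  obtain ⟨hj1, hjm⟩ := hj
  have hm1 : 1 ≤ m := le_trans hj1 hjm
  have hmv : maxLetter v = m := maxLetter_of_packed hm1 hv
  have hmw : maxLetter w = p := maxLetter_of_packed hp hw
  have hM : maxLetter (leftComp v j w) = m + p - 1 :=
    maxLetter_leftComp hv hw hj1 hjm hp
  rw [leftComp, hmw] at hM
  simp only [leftComp, List.flatMap_assoc, hmv, hmw, hM]
  congr 1
  funext a
  by_cases hai : a = i
  · rw [if_pos hai, if_pos hai]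
    subst hai
    simp only [Inc]
    rw [List.flatMap_map, List.map_flatMap]
    congr 1
    funext b
    by_cases hbj : b = j
    · subst hbj
      rw [if_pos rfl]
      have h0b : 0 < b := by omega
      rw [if_pos h0b]
      have hc : b + (a - 1) = a + b - 1 := by omega
      rw [hc, if_pos rfl, List.map_map]
      congr 1
      funext c
      simp only [Function.comp_apply]
      split_ifs <;> omega
    · rw [if_neg hbj]
      have h2 : (if 0 < b then b + (a - 1) else b) ≠ a + j - 1 := by split <;> omega
      rw [if_neg h2, List.map_singleton]
      congr 1
      split_ifs <;> omega
  · rw [if_neg hai, if_neg hai, List.flatMap_singleton]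
    have h1 : (if i < a then a + (m - 1) else a) ≠ i + j - 1 := by split <;> omega
    rw [if_neg h1]
    congr 1
    split_ifs <;> omega
end

section
/- Let P be a predicate on quadruples (u,a,b,v) that is compatible with relabeling and compatible with subwords. Then ≡_P is a congruence for the left composition of packed words: for packed words u, u' with letter set {1,…,n}, packed words v, v' with letter set {1,…,m}, and i ∈ {1,…,n}, if u ≡_P u' and v ≡_P v', then u ∘←_i v ≡_P u' ∘←_i v'. -/
/-- One-step rewriting relation on words: `u·a·b·v ↔ u·b·a·v` whenever `P u a b v` holds. -/
def StepRel (P : List ℕ → ℕ → ℕ → List ℕ → Prop) (x y : List ℕ) : Prop :=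
  ∃ u a b v, P u a b v ∧ x = u ++ a :: b :: v ∧ y = u ++ b :: a :: v

/-- `≡_P`: the reflexive, symmetric, transitive closure of the one-step relation. -/
def EquivP (P : List ℕ → ℕ → ℕ → List ℕ → Prop) : List ℕ → List ℕ → Prop :=
  Relation.EqvGen (StepRel P)

/-- `P` is compatible with subwords. -/
def SubwordCompat (P : List ℕ → ℕ → ℕ → List ℕ → Prop) : Prop :=
  ∀ u a b v u' v', P u a b v → u.Sublist u' → v.Sublist v' → P u' a b v'

/-- `P` is compatible with relabeling by strictly monotone maps of the positive integers. -/
def RelabelCompat (P : List ℕ → ℕ → ℕ → List ℕ → Prop) : Prop :=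
  ∀ f : ℕ → ℕ, StrictMono f → (∀ x, 0 < x → 0 < f x) →
    ∀ u a b v, P u a b v → P (u.map f) (f a) (f b) (v.map f)

/-- `P` is right-trivial. -/
def RightTrivial (P : List ℕ → ℕ → ℕ → List ℕ → Prop) : Prop :=
  ∀ u a b v, P u a b v → P u a b []

/-- Lexicographic order on words. -/
def LexLE (x y : List ℕ) : Prop := x = y ∨ List.Lex (· < ·) x y


/-! ### Auxiliary lemmas -/

def phi (i m c : ℕ) : ℕ := if i < c then c + (m - 1) else c

def gfun (i m : ℕ) (v : List ℕ) (c : ℕ) : List ℕ :=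
  if c = i then Inc (i - 1) 0 v else [phi i m c]

lemma phi_strictMono (i m : ℕ) : StrictMono (phi i m) := by
  intro c c' h; unfold phi; split_ifs <;> omega

lemma phi_pos (i m : ℕ) : ∀ x, 0 < x → 0 < phi i m x := by
  intro x hx; unfold phi; split_ifs <;> omega

def f0 (i c : ℕ) : ℕ := if 0 < c then c + (i - 1) else c

def fx (i m x c : ℕ) : ℕ := if c < i then c else if c = i then x else c + (m - 1)

lemma fx_strictMono (i m x : ℕ) (hi : 1 ≤ i) (h1 : i ≤ x) (h2 : x ≤ m + i - 1) :
    StrictMono (fx i m x) := by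
  intro c c' h; unfold fx; split_ifs <;> omega

lemma fx_pos (i m x : ℕ) (h1 : i ≤ x) : ∀ c, 0 < c → 0 < fx i m x c := by
  intro c hc; unfold fx; split_ifs <;> omega

lemma fx_apply_i (i m x : ℕ) (hi : 1 ≤ i) : fx i m x i = x := by
  unfold fx; split_ifs <;> omega

lemma fx_apply_ne (i m x c : ℕ) (hc : c ≠ i) : fx i m x c = phi i m c := by
  unfold fx phi; split_ifs <;> omega

lemma leftComp_eq_flatMap (i m : ℕ) (v : List ℕ) (hM : maxLetter v = m) (z : List ℕ) :
    leftComp z i v = z.flatMap (gfun i m v) := by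
  unfold leftComp gfun phi
  rw [hM]

lemma maxLetter_cons (c : ℕ) (w : List ℕ) : maxLetter (c :: w) = max c (maxLetter w) := rfl

lemma maxLetter_swap (s t : List ℕ) (a b : ℕ) :
    maxLetter (s ++ a :: b :: t) = maxLetter (s ++ b :: a :: t) := by
  induction s with
  | nil => simp [maxLetter_cons, max_left_comm]
  | cons c s ih => simp [maxLetter_cons, ih]

lemma le_maxLetter_s15 {x : ℕ} : ∀ {v : List ℕ}, x ∈ v → x ≤ maxLetter v := by
  intro v hv
  induction v with
  | nil => simp at hv
  | cons c w ih =>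
    rcases List.mem_cons.mp hv with h | h
    · simp [maxLetter_cons, h]
    · have := ih h; simp [maxLetter_cons]; omega

lemma maxLetter_le {m : ℕ} : ∀ {v : List ℕ}, (∀ x ∈ v, x ≤ m) → maxLetter v ≤ m := by
  intro v hv
  induction v with
  | nil => simp [maxLetter]
  | cons c w ih =>
    have h1 := hv c (by simp)
    have h2 := ih (fun x hx => hv x (by simp [hx]))
    simp [maxLetter_cons]; omega

lemma mem_of_packed {m : ℕ} {v : List ℕ} (hv : IsPackedOn m v) {x : ℕ}
    (hx : x ∈ v) : 1 ≤ x ∧ x ≤ m := by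
  have : x ∈ v.toFinset := List.mem_toFinset.mpr hx
  rw [hv] at this
  exact Finset.mem_Icc.mp this

lemma packed_mem {m : ℕ} {v : List ℕ} (hv : IsPackedOn m v) {x : ℕ}
    (h1 : 1 ≤ x) (h2 : x ≤ m) : x ∈ v := by
  have : x ∈ v.toFinset := by rw [hv]; exact Finset.mem_Icc.mpr ⟨h1, h2⟩
  exact List.mem_toFinset.mp this

lemma maxLetter_packed {m : ℕ} {v : List ℕ} (hv : IsPackedOn m v) (hm : 1 ≤ m) :
    maxLetter v = m := by
  have h1 : m ≤ maxLetter v := le_maxLetter_s15 (packed_mem hv hm le_rfl)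
  have h2 : maxLetter v ≤ m := maxLetter_le (fun x hx => (mem_of_packed hv hx).2)
  omega

lemma i_mem_Inc {m i : ℕ} {v : List ℕ} (hv : IsPackedOn m v) (hm : 1 ≤ m) (hi : 1 ≤ i) :
    i ∈ Inc (i - 1) 0 v := by
  have h1 : (1 : ℕ) ∈ v := packed_mem hv le_rfl hm
  unfold Inc
  exact List.mem_map.mpr ⟨1, h1, by simp; omega⟩

lemma mem_Inc_bounds {m i x : ℕ} {v : List ℕ} (hv : IsPackedOn m v) (hi : 1 ≤ i)
    (hx : x ∈ Inc (i - 1) 0 v) : i ≤ x ∧ x ≤ m + i - 1 := by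
  unfold Inc at hx
  obtain ⟨c, hc, rfl⟩ := List.mem_map.mp hx
  have := mem_of_packed hv hc
  split_ifs <;> omega

section EquivLemmas

variable {P : List ℕ → ℕ → ℕ → List ℕ → Prop}

lemma equivP_cast {x y x' y' : List ℕ} (h : EquivP P x y) (ex : x = x') (ey : y = y') :
    EquivP P x' y' := by subst ex; subst ey; exact h

lemma stepRel_extend (hsub : SubwordCompat P) {x y : List ℕ} (A B : List ℕ)
    (h : StepRel P x y) : StepRel P (A ++ x ++ B) (A ++ y ++ B) := by
  obtain ⟨u, a, b, v, hP, rfl, rfl⟩ := h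
  refine ⟨A ++ u, a, b, v ++ B,
    hsub u a b v (A ++ u) (v ++ B) hP (List.sublist_append_right A u)
      (List.sublist_append_left v B), by simp, by simp⟩

lemma equivP_extend (hsub : SubwordCompat P) {x y : List ℕ} (A B : List ℕ)
    (h : EquivP P x y) : EquivP P (A ++ x ++ B) (A ++ y ++ B) := by
  induction h with
  | rel x y h => exact Relation.EqvGen.rel _ _ (stepRel_extend hsub A B h)
  | refl x => exact Relation.EqvGen.refl _
  | symm _ _ _ ih => exact Relation.EqvGen.symm _ _ ih
  | trans _ _ _ _ _ ih1 ih2 => exact Relation.EqvGen.trans _ _ _ ih1 ih2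

lemma equivP_append_left (hsub : SubwordCompat P) {x y : List ℕ} (A : List ℕ)
    (h : EquivP P x y) : EquivP P (A ++ x) (A ++ y) := by
  have := equivP_extend hsub A [] h
  simpa using this

lemma equivP_move_left (hsub : SubwordCompat P) (y : ℕ) (C₀ D₀ : List ℕ) :
    ∀ (W C D : List ℕ), C₀.Sublist C → D₀.Sublist D → (∀ x ∈ W, P C₀ x y D₀) →
    EquivP P (C ++ W ++ y :: D) (C ++ y :: (W ++ D)) := by
  intro W
  induction W with
  | nil =>
    intro C D _ _ _
    exact equivP_cast (Relation.EqvGen.refl (C ++ y :: D)) (by simp) (by simp)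
  | cons x W ih =>
    intro C D hC hD hW
    have h1 : EquivP P ((C ++ [x]) ++ W ++ y :: D) ((C ++ [x]) ++ y :: (W ++ D)) :=
      ih (C ++ [x]) D (hC.trans (List.sublist_append_left C [x])) hD
        (fun z hz => hW z (List.mem_cons_of_mem _ hz))
    have hP : P C x y (W ++ D) :=
      hsub C₀ x y D₀ C (W ++ D) (hW x (by simp)) hC
        (hD.trans (List.sublist_append_right W D))
    have step : EquivP P (C ++ x :: y :: (W ++ D)) (C ++ y :: x :: (W ++ D)) :=
      Relation.EqvGen.rel _ _ ⟨C, x, y, W ++ D, hP, rfl, rfl⟩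
    exact equivP_cast
      (Relation.EqvGen.trans _ _ _ h1 (equivP_cast step (by simp) rfl))
      (by simp) (by simp)

lemma equivP_move_right (hsub : SubwordCompat P) (y : ℕ) (C₀ D₀ : List ℕ) :
    ∀ (W C D : List ℕ), C₀.Sublist C → D₀.Sublist D → (∀ x ∈ W, P C₀ y x D₀) →
    EquivP P (C ++ y :: (W ++ D)) (C ++ W ++ y :: D) := by
  intro W
  induction W with
  | nil =>
    intro C D _ _ _
    exact equivP_cast (Relation.EqvGen.refl (C ++ y :: D)) (by simp) (by simp)
  | cons x W ih =>
    intro C D hC hD hW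
    have hP : P C y x (W ++ D) :=
      hsub C₀ y x D₀ C (W ++ D) (hW x (by simp)) hC
        (hD.trans (List.sublist_append_right W D))
    have step : EquivP P (C ++ y :: x :: (W ++ D)) (C ++ x :: y :: (W ++ D)) :=
      Relation.EqvGen.rel _ _ ⟨C, y, x, W ++ D, hP, rfl, rfl⟩
    have h1 : EquivP P ((C ++ [x]) ++ y :: (W ++ D)) ((C ++ [x]) ++ W ++ y :: D) :=
      ih (C ++ [x]) D (hC.trans (List.sublist_append_left C [x])) hD
        (fun z hz => hW z (List.mem_cons_of_mem _ hz))
    exact equivP_cast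
      (Relation.EqvGen.trans _ _ _ step (equivP_cast h1 (by simp) rfl))
      (by simp) (by simp)

lemma map_sublist_flatMap {f : ℕ → ℕ} {g : ℕ → List ℕ} (h : ∀ c, [f c].Sublist (g c)) :
    ∀ z : List ℕ, (z.map f).Sublist (z.flatMap g) := by
  intro z
  induction z with
  | nil => simp
  | cons c z ih =>
    simp only [List.map_cons, List.flatMap_cons]
    exact List.Sublist.append (h c) ih

lemma partA_step (hrel : RelabelCompat P) (hsub : SubwordCompat P)
    {i m : ℕ} (hi : 1 ≤ i) (hm : 1 ≤ m) {v : List ℕ} (hv : IsPackedOn m v)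
    {u u' : List ℕ} (h : StepRel P u u') :
    EquivP P (leftComp u i v) (leftComp u' i v) := by
  obtain ⟨w, a, b, w', hP, rfl, rfl⟩ := h
  have hM := maxLetter_packed hv hm
  rw [leftComp_eq_flatMap i m v hM, leftComp_eq_flatMap i m v hM]
  set g := gfun i m v with hg
  have hiV : i ∈ Inc (i - 1) 0 v := i_mem_Inc hv hm hi
  -- key sublist fact for fx
  have hfx : ∀ x ∈ Inc (i - 1) 0 v, ∀ c, [fx i m x c].Sublist (g c) := by
    intro x hx c
    by_cases hc : c = i
    · rw [hc, fx_apply_i i m x hi]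
      simp only [hg, gfun, if_pos rfl]
      exact List.singleton_sublist.mpr hx
    · rw [fx_apply_ne i m x c hc]
      simp only [hg, gfun, if_neg hc]
      exact List.Sublist.refl _
  have hphi : ∀ c, [phi i m c].Sublist (g c) := by
    intro c
    by_cases hc : c = i
    · have hpc : phi i m c = i := by rw [hc]; simp [phi]
      rw [hpc]
      simp only [hg, gfun, if_pos hc]
      exact List.singleton_sublist.mpr hiV
    · simp only [hg, gfun, if_neg hc]
      exact List.Sublist.refl _
  -- core P-fact with fx relabeling, for x ∈ V
  have hcore : ∀ x ∈ Inc (i - 1) 0 v, ∀ a' b', a' = i ∨ a' ≠ i → P w a' b' w' →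
      P (w.flatMap g) (fx i m x a') (fx i m x b') (w'.flatMap g) := by
    intro x hx a' b' _ hP'
    obtain ⟨hx1, hx2⟩ := mem_Inc_bounds hv hi hx
    have := hrel (fx i m x) (fx_strictMono i m x hi hx1 hx2) (fx_pos i m x hx1) w a' b' w' hP'
    exact hsub _ _ _ _ _ _ this (map_sublist_flatMap (hfx x hx) w)
      (map_sublist_flatMap (hfx x hx) w')
  by_cases ha : a = i <;> by_cases hb : b = i
  · obtain rfl := ha.symm; obtain rfl := hb.symm; exact Relation.EqvGen.refl _
  · -- a = i, b ≠ i : move phi b leftwards across V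
    obtain rfl := ha.symm
    have hmain := equivP_move_left hsub (phi i m b) (w.flatMap g) (w'.flatMap g)
      (Inc (i - 1) 0 v) (w.flatMap g) (w'.flatMap g) (List.Sublist.refl _)
      (List.Sublist.refl _)
      (fun x hx => by
        have := hcore x hx i b (Or.inl rfl) hP
        rwa [fx_apply_i i m x hi, fx_apply_ne i m x b hb] at this)
    exact equivP_cast hmain (by simp [hg, gfun, phi, hb]) (by simp [hg, gfun, phi, hb])
  · -- a ≠ i, b = i : move phi a rightwards across V
    obtain rfl := hb.symm
    have hmain := equivP_move_right hsub (phi i m a) (w.flatMap g) (w'.flatMap g)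
      (Inc (i - 1) 0 v) (w.flatMap g) (w'.flatMap g) (List.Sublist.refl _)
      (List.Sublist.refl _)
      (fun x hx => by
        have := hcore x hx a i (Or.inr ha) hP
        rwa [fx_apply_i i m x hi, fx_apply_ne i m x a ha] at this)
    exact equivP_cast hmain (by simp [hg, gfun, phi, ha]) (by simp [hg, gfun, phi, ha])
  · -- neither is i : single step with phi relabeling
    have hPphi : P (w.flatMap g) (phi i m a) (phi i m b) (w'.flatMap g) := by
      have := hrel (phi i m) (phi_strictMono i m) (phi_pos i m) w a b w' hP
      exact hsub _ _ _ _ _ _ this (map_sublist_flatMap hphi w)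
        (map_sublist_flatMap hphi w')
    refine Relation.EqvGen.rel _ _ ⟨w.flatMap g, phi i m a, phi i m b, w'.flatMap g, hPphi,
      ?_, ?_⟩ <;> simp [hg, gfun, phi, ha, hb]

lemma partB_step (hrel : RelabelCompat P) (hsub : SubwordCompat P)
    {i : ℕ} (hi : 1 ≤ i) {v v' : List ℕ} (h : StepRel P v v') (u : List ℕ) :
    EquivP P (leftComp u i v) (leftComp u i v') := by
  obtain ⟨s, a, b, t, hP, rfl, rfl⟩ := h
  rw [leftComp_eq_flatMap i (maxLetter (s ++ a :: b :: t)) _ rfl,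
    leftComp_eq_flatMap i (maxLetter (s ++ a :: b :: t)) _ (maxLetter_swap s t a b).symm]
  have hf₀mono : StrictMono (f0 i) := by
    intro c c' hc; unfold f0; split_ifs <;> omega
  have hf₀pos : ∀ x, 0 < x → 0 < f0 i x := by
    intro x hx; unfold f0; split_ifs <;> omega
  have hInc : ∀ z : List ℕ, Inc (i - 1) 0 z = z.map (f0 i) := fun z => rfl
  have hcore : P (Inc (i - 1) 0 s) (f0 i a) (f0 i b) (Inc (i - 1) 0 t) := by
    rw [hInc, hInc]
    exact hrel (f0 i) hf₀mono hf₀pos s a b t hP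
  set M := maxLetter (s ++ a :: b :: t)
  induction u with
  | nil => exact Relation.EqvGen.refl _
  | cons c u ih =>
    simp only [List.flatMap_cons]
    by_cases hc : c = i
    · have hgv : gfun i M (s ++ a :: b :: t) c = Inc (i - 1) 0 s ++
          f0 i a :: f0 i b :: Inc (i - 1) 0 t := by
        rw [hc]; simp [gfun, hInc, f0]
      have hgv' : gfun i M (s ++ b :: a :: t) c = Inc (i - 1) 0 s ++
          f0 i b :: f0 i a :: Inc (i - 1) 0 t := by
        rw [hc]; simp [gfun, hInc, f0]
      rw [hgv, hgv']
      have hPext : P (Inc (i - 1) 0 s) (f0 i a) (f0 i b)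
          (Inc (i - 1) 0 t ++ (u.flatMap (gfun i M (s ++ a :: b :: t)))) :=
        hsub _ _ _ _ _ _ hcore (List.Sublist.refl _) (List.sublist_append_left _ _)
      have step : EquivP P
          (Inc (i - 1) 0 s ++ f0 i a :: f0 i b ::
            (Inc (i - 1) 0 t ++ u.flatMap (gfun i M (s ++ a :: b :: t))))
          (Inc (i - 1) 0 s ++ f0 i b :: f0 i a ::
            (Inc (i - 1) 0 t ++ u.flatMap (gfun i M (s ++ a :: b :: t)))) :=
        Relation.EqvGen.rel _ _ ⟨_, _, _, _, hPext, rfl, rfl⟩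
      have h3 : EquivP P
          (Inc (i - 1) 0 s ++ f0 i b :: f0 i a ::
            (Inc (i - 1) 0 t ++ u.flatMap (gfun i M (s ++ a :: b :: t))))
          (Inc (i - 1) 0 s ++ f0 i b :: f0 i a ::
            (Inc (i - 1) 0 t ++ u.flatMap (gfun i M (s ++ b :: a :: t)))) :=
        equivP_cast
          (equivP_append_left hsub (Inc (i - 1) 0 s ++ f0 i b :: f0 i a :: Inc (i - 1) 0 t) ih)
          (by simp) (by simp)
      exact equivP_cast (Relation.EqvGen.trans _ _ _ step h3) (by simp) (by simp)
    · have hgv : gfun i M (s ++ a :: b :: t) c = [phi i M c] := by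
        simp [gfun, hc]
      have hgv' : gfun i M (s ++ b :: a :: t) c = [phi i M c] := by
        simp [gfun, hc]
      rw [hgv, hgv']
      exact equivP_append_left hsub _ ih

lemma partA_full (hrel : RelabelCompat P) (hsub : SubwordCompat P)
    {i m : ℕ} (hi : 1 ≤ i) (hm : 1 ≤ m) {v : List ℕ} (hv : IsPackedOn m v)
    {u u' : List ℕ} (h : EquivP P u u') :
    EquivP P (leftComp u i v) (leftComp u' i v) := by
  induction h with
  | rel x y h => exact partA_step hrel hsub hi hm hv h
  | refl x => exact Relation.EqvGen.refl _
  | symm _ _ _ ih => exact Relation.EqvGen.symm _ _ ih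
  | trans _ _ _ _ _ ih1 ih2 => exact Relation.EqvGen.trans _ _ _ ih1 ih2

lemma partB_full (hrel : RelabelCompat P) (hsub : SubwordCompat P)
    {i : ℕ} (hi : 1 ≤ i) {v v' : List ℕ} (h : EquivP P v v') (u : List ℕ) :
    EquivP P (leftComp u i v) (leftComp u i v') := by
  induction h with
  | rel x y h => exact partB_step hrel hsub hi h u
  | refl x => exact Relation.EqvGen.refl _
  | symm _ _ _ ih => exact Relation.EqvGen.symm _ _ ih
  | trans _ _ _ _ _ ih1 ih2 => exact Relation.EqvGen.trans _ _ _ ih1 ih2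

end EquivLemmas

/-- If `P` is compatible with relabeling and with subwords, then `≡_P` is a congruence
for the left composition of packed words. -/
theorem equivP_leftComp_congruence (P : List ℕ → ℕ → ℕ → List ℕ → Prop)
    (hrel : RelabelCompat P) (hsub : SubwordCompat P) (n m i : ℕ)
    (u u' v v' : List ℕ)
    (hu : IsPackedOn n u) (hu' : IsPackedOn n u')
    (hv : IsPackedOn m v) (hv' : IsPackedOn m v')
    (hi : i ∈ Finset.Icc 1 n) (hm : 1 ≤ m)
    (h1 : EquivP P u u') (h2 : EquivP P v v') :
    EquivP P (leftComp u i v) (leftComp u' i v') := by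
  have hi1 : 1 ≤ i := (Finset.mem_Icc.mp hi).1
  exact Relation.EqvGen.trans _ _ _ (partB_full hrel hsub hi1 h2 u)
    (partA_full hrel hsub hi1 hm hv' h1)
end
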